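/- Let P be a positive opetope, x_l ∈ P_l a face and x_{l+1} ∈ ∂(x_{l+1}) with x_l = γ(x_{l+1}). Then the extension function (−)/x_l : Flags[x_n, x_{l+1}] → Flags[x_n, x_l], appending x_l to a flag ending at x_{l+1}, preserves the successor function and the flag order. If instead x_l ∈ δ(x_{l+1}), then the same extension function preserves the successor and order as a map from the opposite order Flags^{op}[x_n, x_{l+1}] to Flags[x_n, x_l]. -/
import Mathlib


open scoped Classical

structure PHg where
  Face : ℕ → Type
  fin : ∀ k, Finite (Face k)
  γ : ∀ k, Face (k+1) → Face k
  δ : ∀ k, Face (k+1) → Face k → Prop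
  δ_total : ∀ k a, ∃ x, δ k a x
  δ0_fun : ∀ (a : Face 1) (x y : Face 0), δ 0 a x → δ 0 a y → x = y
  bounded : ∃ n, ∀ k, n < k → IsEmpty (Face k)

abbrev PHg.FaceS (S : PHg) : Type := Σ k, S.Face k

/-- The codomain operation, viewed on faces of arbitrary dimension
(identity in dimension 0). -/
def gammaS (S : PHg) : S.FaceS → S.FaceS
  | ⟨0, x⟩ => ⟨0, x⟩
  | ⟨k+1, x⟩ => ⟨k, S.γ k x⟩

/-- `x ∈ δ(q)`. -/
def inDelta (S : PHg) (x q : S.FaceS) : Prop :=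
  match q with
  | ⟨0, _⟩ => False
  | ⟨k+1, a⟩ => ∃ h : x.1 = k, S.δ k a (h ▸ x.2)

/-- `x = γ(q)` (for `q` of positive dimension). -/
def inGammaS (S : PHg) (x q : S.FaceS) : Prop := 0 < q.1 ∧ gammaS S q = x

/-- `x ∈ ∂(q) = {γ(q)} ∪ δ(q)`. -/
def inBoundary (S : PHg) (x q : S.FaceS) : Prop := inGammaS S x q ∨ inDelta S x q

def covPlus (S : PHg) (a b : S.FaceS) : Prop :=
  ∃ α, inDelta S a α ∧ gammaS S α = b

/-- The upper order `<⁺`. -/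
def ltPlus (S : PHg) : S.FaceS → S.FaceS → Prop := Relation.TransGen (covPlus S)

def lePlus (S : PHg) (a b : S.FaceS) : Prop := a = b ∨ ltPlus S a b

def perpPlus (S : PHg) (a b : S.FaceS) : Prop := ltPlus S a b ∨ ltPlus S b a

def covMinus (S : PHg) (a b : S.FaceS) : Prop := 0 < a.1 ∧ inDelta S (gammaS S a) b

/-- The lower order `<⁻`. -/
def ltMinus (S : PHg) : S.FaceS → S.FaceS → Prop := Relation.TransGen (covMinus S)

def perpMinus (S : PHg) (a b : S.FaceS) : Prop := ltMinus S a b ∨ ltMinus S b a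

/-- Iterated codomain `γ^{(k)}`. -/
def gammaIter (S : PHg) (k : ℕ) (p : S.FaceS) : S.FaceS := (gammaS S)^[p.1 - k] p

/-- `X` is a `<⁺`-interval. -/
def IntervalPlus (S : PHg) (X : Set S.FaceS) : Prop :=
  X = ∅ ∨ ∃ x0 x1, lePlus S x0 x1 ∧ X = {x | lePlus S x0 x ∧ lePlus S x x1}

def hasDim (S : PHg) (n : ℕ) : Prop :=
  Nonempty (S.Face n) ∧ ∀ k, n < k → IsEmpty (S.Face k)

/-- A positive opetope: a nonempty positive hypergraph satisfying globularity,
strictness, disjointness, pencil linearity, and having at most one face outside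
`δ(S_{k+1})` in each dimension. -/
structure IsOpetope (S : PHg) : Prop where
  ne : Nonempty (S.Face 0)
  glob_gamma : ∀ a : S.FaceS, 2 ≤ a.1 →
    ({gammaS S (gammaS S a)} : Set S.FaceS) =
      {x | ∃ y, inDelta S y a ∧ gammaS S y = x} \ {x | ∃ y, inDelta S y a ∧ inDelta S x y}
  glob_delta : ∀ a : S.FaceS, 2 ≤ a.1 →
    {x | inDelta S x (gammaS S a)} =
      {x | ∃ y, inDelta S y a ∧ inDelta S x y} \ {x | ∃ y, inDelta S y a ∧ gammaS S y = x}
  strict : ∀ a, ¬ ltPlus S a a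
  linear0 : ∀ a b : S.FaceS, a.1 = 0 → b.1 = 0 → a = b ∨ perpPlus S a b
  disj : ∀ a b : S.FaceS, 0 < a.1 → ¬ (perpMinus S a b ∧ perpPlus S a b)
  pencil_gamma : ∀ x a b, inGammaS S x a → inGammaS S x b → a = b ∨ perpPlus S a b
  pencil_delta : ∀ x a b, inDelta S x a → inDelta S x b → a = b ∨ perpPlus S a b
  size_le_one : ∀ k (a b : S.Face k),
    (¬ ∃ α : S.Face (k+1), S.δ k α a) → (¬ ∃ α : S.Face (k+1), S.δ k α b) → a = b
/-- A restricted flag from dimension `m` down to dimension `l`,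
encoded as a function `ℕ → S.FaceS` (entries outside `[l,m]` are irrelevant). -/
def IsRFlag (S : PHg) (m l : ℕ) (F : ℕ → S.FaceS) : Prop :=
  (∀ i, l ≤ i → i ≤ m → (F i).1 = i) ∧
  (∀ i, l ≤ i → i < m → inBoundary S (F i) (F (i+1)))

/-- The pencil order `≺ₓ` on the pencil over `x`. -/
def pencilLt (S : PHg) (x a b : S.FaceS) : Prop :=
  (inGammaS S x b ∧ inDelta S x a) ∨
  (inDelta S x a ∧ inDelta S x b ∧ ltPlus S a b) ∨
  (inGammaS S x a ∧ inGammaS S x b ∧ ltPlus S b a)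

/-- The sign of the flag segment `[F j, …, F l]`. -/
noncomputable def sgnSeg (S : PHg) (l : ℕ) (F : ℕ → S.FaceS) : ℕ → ℤ
  | 0 => 1
  | j+1 => if l ≤ j ∧ inDelta S (F j) (F (j+1)) then -(sgnSeg S l F j) else sgnSeg S l F j

/-- The flag order `◁` on flags from dimension `m` down to `l`. -/
def flagLt (S : PHg) (l m : ℕ) (F G : ℕ → S.FaceS) : Prop :=
  ∃ k, l ≤ k ∧ k ≤ m ∧ (∀ i, l ≤ i → i < k → F i = G i) ∧ F k ≠ G k ∧
    ((k = 0 ∧ ltPlus S (G 0) (F 0)) ∨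
     (0 < k ∧ sgnSeg S l F (k-1) = 1 ∧ pencilLt S (F (k-1)) (F k) (G k)) ∨
     (0 < k ∧ sgnSeg S l F (k-1) = -1 ∧ pencilLt S (F (k-1)) (G k) (F k)))

/-- `i` is the low level `ll` of the flag `F` (with top dimension `n`). -/
def LowLevelT (S : PHg) (n : ℕ) (F : ℕ → S.FaceS) (i : ℕ) : Prop :=
  i + 2 ≤ n ∧ inDelta S (F (i+1)) (F (i+2)) ∧
    ∀ j, i < j → j + 2 ≤ n → ¬ inDelta S (F (j+1)) (F (j+2))

/-- Membership in `Flags[t / b]`, flags from top face `t` (dim `m`) to bottom face `b` (dim `l`). -/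
def MemFlags (S : PHg) (l m : ℕ) (t b : S.FaceS) (F : ℕ → S.FaceS) : Prop :=
  IsRFlag S m l F ∧ F m = t ∧ F l = b

def EqOnFl {α : Type*} (l m : ℕ) (F G : ℕ → α) : Prop :=
  ∀ i, l ≤ i → i ≤ m → F i = G i

/-- `G` is the successor of `F` in `Flags[t / b]` with respect to the flag order. -/
def SuccFl (S : PHg) (l m : ℕ) (t b : S.FaceS) (F G : ℕ → S.FaceS) : Prop :=
  MemFlags S l m t b F ∧ MemFlags S l m t b G ∧ flagLt S l m F G ∧
  ∀ H, MemFlags S l m t b H → flagLt S l m F H → (EqOnFl l m G H ∨ flagLt S l m G H)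
section Helpers

variable (S : PHg)

lemma sgnSeg_pm (l : ℕ) (F : ℕ → S.FaceS) : ∀ j, sgnSeg S l F j = 1 ∨ sgnSeg S l F j = -1
  | 0 => Or.inl rfl
  | j+1 => by
      rcases sgnSeg_pm l F j with h | h <;> rw [sgnSeg] <;> split <;> simp [h]

lemma sgnSeg_congr (l : ℕ) (F G : ℕ → S.FaceS) :
    ∀ j, (∀ i, l ≤ i → i ≤ j → F i = G i) → sgnSeg S l F j = sgnSeg S l G j
  | 0, _ => rfl
  | j+1, h => by
      have hrec := sgnSeg_congr l F G j (fun i hi hij => h i hi (by omega))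
      rw [sgnSeg, sgnSeg, hrec]
      by_cases hc : l ≤ j
      · rw [h j hc (by omega), h (j+1) (by omega) (by omega)]
      · rw [if_neg (fun hh => hc hh.1), if_neg (fun hh => hc hh.1)]

lemma sgnSeg_of_le (l : ℕ) (F : ℕ → S.FaceS) : ∀ j, j ≤ l → sgnSeg S l F j = 1
  | 0, _ => rfl
  | j+1, h => by
      rw [sgnSeg, if_neg (fun hh => by omega)]
      exact sgnSeg_of_le l F j (by omega)

lemma sgnSeg_shift_gamma (l : ℕ) (F : ℕ → S.FaceS) (hnd : ¬ inDelta S (F l) (F (l+1))) :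
    ∀ j, sgnSeg S l F j = sgnSeg S (l+1) F j
  | 0 => rfl
  | j+1 => by
      have ih := sgnSeg_shift_gamma l F hnd j
      rw [sgnSeg, sgnSeg, ih]
      refine if_congr ⟨fun ⟨h1, h2⟩ => ⟨?_, h2⟩, fun ⟨h1, h2⟩ => ⟨by omega, h2⟩⟩ rfl rfl
      rcases Nat.eq_or_lt_of_le h1 with he | hlt
      · exact absurd (he ▸ h2) hnd
      · omega

lemma sgnSeg_shift_delta (l : ℕ) (F : ℕ → S.FaceS) (hd : inDelta S (F l) (F (l+1))) :
    ∀ j, l + 1 ≤ j → sgnSeg S l F j = -sgnSeg S (l+1) F j := by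
  intro j hj
  induction j, hj using Nat.le_induction with
  | base =>
      rw [sgnSeg, if_pos ⟨le_rfl, hd⟩, sgnSeg_of_le S l F l le_rfl,
        sgnSeg_of_le S (l+1) F (l+1) le_rfl]
  | succ j hj ih =>
      rw [sgnSeg, sgnSeg]
      by_cases hD : inDelta S (F j) (F (j+1))
      · rw [if_pos ⟨by omega, hD⟩, if_pos ⟨by omega, hD⟩, ih]
      · rw [if_neg (fun hh => hD hh.2), if_neg (fun hh => hD hh.2), ih]


lemma not_gamma_and_delta (hS : IsOpetope S) {x q : S.FaceS}
    (hg : inGammaS S x q) (hd : inDelta S x q) : False :=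
  hS.strict x (Relation.TransGen.single ⟨q, hd, hg.2⟩)

lemma pencil_total (hS : IsOpetope S) {x a b : S.FaceS}
    (ha : inBoundary S x a) (hb : inBoundary S x b) (hne : a ≠ b) :
    pencilLt S x a b ∨ pencilLt S x b a := by
  rcases ha with hga | hda <;> rcases hb with hgb | hdb
  · rcases hS.pencil_gamma x a b hga hgb with h | h | h
    · exact absurd h hne
    · exact Or.inr (Or.inr (Or.inr ⟨hgb, hga, h⟩))
    · exact Or.inl (Or.inr (Or.inr ⟨hga, hgb, h⟩))
  · exact Or.inr (Or.inl ⟨hga, hdb⟩)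
  · exact Or.inl (Or.inl ⟨hgb, hda⟩)
  · rcases hS.pencil_delta x a b hda hdb with h | h | h
    · exact absurd h hne
    · exact Or.inl (Or.inr (Or.inl ⟨hda, hdb, h⟩))
    · exact Or.inr (Or.inr (Or.inl ⟨hdb, hda, h⟩))

lemma pencil_asymm (hS : IsOpetope S) {x a b : S.FaceS}
    (h1 : pencilLt S x a b) (h2 : pencilLt S x b a) : False := by
  rcases h1 with ⟨hgb, hda⟩ | ⟨hda, hdb, hab⟩ | ⟨hga, hgb, hba⟩ <;>
    rcases h2 with ⟨hga', hdb'⟩ | ⟨hdb', hda', hba'⟩ | ⟨hgb', hga', hab'⟩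
  · exact not_gamma_and_delta S hS hga' hda
  · exact not_gamma_and_delta S hS hgb hdb'
  · exact not_gamma_and_delta S hS hga' hda
  · exact not_gamma_and_delta S hS hga' hda
  · exact hS.strict a (hab.trans hba')
  · exact not_gamma_and_delta S hS hgb' hdb
  · exact not_gamma_and_delta S hS hgb hdb'
  · exact not_gamma_and_delta S hS hga hda'
  · exact hS.strict a (hab'.trans hba)

lemma flagLt_asymm (hS : IsOpetope S) (l m : ℕ) (F G : ℕ → S.FaceS)
    (hbot : F l = G l) (h1 : flagLt S l m F G) (h2 : flagLt S l m G F) : False := by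
  obtain ⟨k1, hk1l, hk1m, hag1, hne1, hc1⟩ := h1
  obtain ⟨k2, hk2l, hk2m, hag2, hne2, hc2⟩ := h2
  have hk : k1 = k2 := by
    by_contra hk
    rcases Nat.lt_or_ge k1 k2 with h | h
    · exact hne1 (hag2 k1 hk1l h).symm
    · exact hne2 (hag1 k2 hk2l (by omega)).symm
  subst hk
  have hkl : l < k1 := by
    rcases Nat.eq_or_lt_of_le hk1l with he | h
    · exact absurd (he ▸ hbot) hne1
    · exact h
  have hprev : F (k1 - 1) = G (k1 - 1) := hag1 (k1 - 1) (by omega) (by omega)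
  have hsgn : sgnSeg S l F (k1 - 1) = sgnSeg S l G (k1 - 1) :=
    sgnSeg_congr S l F G (k1 - 1) (fun i hi hij => hag1 i hi (by omega))
  rcases hc1 with ⟨h0, _⟩ | ⟨_, hs1, hp1⟩ | ⟨_, hs1, hp1⟩ <;>
    rcases hc2 with ⟨h0', _⟩ | ⟨_, hs2, hp2⟩ | ⟨_, hs2, hp2⟩ <;> try omega
  · exact pencil_asymm S hS hp1 (by rw [← hprev] at hp2; exact hp2)
  · exact pencil_asymm S hS hp1 (by rw [← hprev] at hp2; exact hp2)

lemma flag_tri (hS : IsOpetope S) (l m : ℕ) (t b : S.FaceS) (F G : ℕ → S.FaceS)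
    (hF : MemFlags S l m t b F) (hG : MemFlags S l m t b G)
    (hne : ¬ EqOnFl l m F G) : flagLt S l m F G ∨ flagLt S l m G F := by
  have hex : ∃ k, l ≤ k ∧ k ≤ m ∧ F k ≠ G k := by
    by_contra h
    push_neg at h
    exact hne (fun i hi him => h i hi him)
  have hk := Nat.find_spec hex
  set k := Nat.find hex with hkdef
  obtain ⟨hkl, hkm, hnek⟩ := hk
  have hag : ∀ i, l ≤ i → i < k → F i = G i := by
    intro i hi hik
    by_contra hne'
    exact Nat.find_min hex hik ⟨hi, by omega, hne'⟩
  have hlk : l < k := by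
    rcases Nat.eq_or_lt_of_le hkl with he | h
    · exfalso; apply hnek; rw [← he, hF.2.2, hG.2.2]
    · exact h
  have hk1 : k - 1 + 1 = k := by omega
  have hbF : inBoundary S (F (k-1)) (F k) := by
    have := hF.1.2 (k-1) (by omega) (by omega)
    rwa [hk1] at this
  have hbG : inBoundary S (F (k-1)) (G k) := by
    have := hG.1.2 (k-1) (by omega) (by omega)
    rw [hk1] at this
    rwa [hag (k-1) (by omega) (by omega)]
  have hprev : F (k-1) = G (k-1) := hag _ (by omega) (by omega)
  have hsgn : sgnSeg S l G (k-1) = sgnSeg S l F (k-1) :=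
    sgnSeg_congr S l G F (k-1) (fun i hi hij => (hag i hi (by omega)).symm)
  rcases pencil_total S hS hbF hbG hnek with hp | hp <;>
    rcases sgnSeg_pm S l F (k-1) with hs | hs
  · exact Or.inl ⟨k, hkl, hkm, hag, hnek, Or.inr (Or.inl ⟨by omega, hs, hp⟩)⟩
  · exact Or.inr ⟨k, hkl, hkm, fun i hi hik => (hag i hi hik).symm, hnek.symm,
      Or.inr (Or.inr ⟨by omega, by rw [hsgn, hs], by rw [← hprev]; exact hp⟩)⟩
  · exact Or.inr ⟨k, hkl, hkm, fun i hi hik => (hag i hi hik).symm, hnek.symm,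
      Or.inr (Or.inl ⟨by omega, by rw [hsgn, hs], by rw [← hprev]; exact hp⟩)⟩
  · exact Or.inl ⟨k, hkl, hkm, hag, hnek, Or.inr (Or.inr ⟨by omega, hs, hp⟩)⟩

lemma gammaS_dim (q : S.FaceS) : (gammaS S q).1 = q.1 - 1 := by
  rcases q with ⟨_ | k, x⟩ <;> rfl

lemma inDelta_dim {x q : S.FaceS} (h : inDelta S x q) : x.1 + 1 = q.1 := by
  rcases q with ⟨_ | k, a⟩
  · exact h.elim
  · obtain ⟨hh, -⟩ := h
    simp [hh]

lemma transfer_gamma (l n : ℕ) (xl xl1 : S.FaceS) (hnd : ¬ inDelta S xl xl1)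
    (F G : ℕ → S.FaceS) (hF1 : F (l+1) = xl1) (hG1 : G (l+1) = xl1) :
    flagLt S l n (Function.update F l xl) (Function.update G l xl) ↔ flagLt S (l+1) n F G := by
  have hFl : Function.update F l xl l = xl := Function.update_self l xl F
  have hGl : Function.update G l xl l = xl := Function.update_self l xl G
  have hFu : ∀ i, l + 1 ≤ i → Function.update F l xl i = F i :=
    fun i hi => Function.update_of_ne (show i ≠ l by omega) xl F
  have hGu : ∀ i, l + 1 ≤ i → Function.update G l xl i = G i :=
    fun i hi => Function.update_of_ne (show i ≠ l by omega) xl G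
  have hsgnF : ∀ j, sgnSeg S l (Function.update F l xl) j = sgnSeg S (l+1) F j := by
    intro j
    rw [sgnSeg_shift_gamma S l (Function.update F l xl)
      (by rw [hFl, hFu (l+1) le_rfl, hF1]; exact hnd) j]
    exact sgnSeg_congr S (l+1) _ F j (fun i hi _ => hFu i hi)
  constructor
  · rintro ⟨k, hkl, hkn, hag, hne, hc⟩
    have hkne_l : k ≠ l := fun he => hne (by rw [he, hFl, hGl])
    have hkne_l1 : k ≠ l + 1 := fun he => hne (by rw [he, hFu _ le_rfl, hGu _ le_rfl, hF1, hG1])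
    have hk2 : l + 2 ≤ k := by omega
    refine ⟨k, by omega, hkn, ?_, ?_, ?_⟩
    · intro i hi hik
      have := hag i (by omega) hik
      rwa [hFu i hi, hGu i hi] at this
    · rwa [hFu k (by omega), hGu k (by omega)] at hne
    · rcases hc with ⟨h0, _⟩ | ⟨hk0, hs, hp⟩ | ⟨hk0, hs, hp⟩
      · omega
      · refine Or.inr (Or.inl ⟨by omega, ?_, ?_⟩)
        · rw [← hsgnF]; exact hs
        · rwa [hFu (k-1) (by omega), hFu k (by omega), hGu k (by omega)] at hp
      · refine Or.inr (Or.inr ⟨by omega, ?_, ?_⟩)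
        · rw [← hsgnF]; exact hs
        · rwa [hFu (k-1) (by omega), hFu k (by omega), hGu k (by omega)] at hp
  · rintro ⟨k, hkl, hkn, hag, hne, hc⟩
    have hkne_l1 : k ≠ l + 1 := fun he => hne (by rw [he, hF1, hG1])
    have hk2 : l + 2 ≤ k := by omega
    refine ⟨k, by omega, hkn, ?_, ?_, ?_⟩
    · intro i hi hik
      rcases Nat.eq_or_lt_of_le hi with he | hlt
      · rw [← he, hFl, hGl]
      · rw [hFu i (by omega), hGu i (by omega)]
        exact hag i (by omega) hik
    · rw [hFu k (by omega), hGu k (by omega)]; exact hne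
    · rcases hc with ⟨h0, _⟩ | ⟨hk0, hs, hp⟩ | ⟨hk0, hs, hp⟩
      · omega
      · refine Or.inr (Or.inl ⟨by omega, ?_, ?_⟩)
        · rw [hsgnF]; exact hs
        · rw [hFu (k-1) (by omega), hFu k (by omega), hGu k (by omega)]; exact hp
      · refine Or.inr (Or.inr ⟨by omega, ?_, ?_⟩)
        · rw [hsgnF]; exact hs
        · rw [hFu (k-1) (by omega), hFu k (by omega), hGu k (by omega)]; exact hp

lemma transfer_delta (l n : ℕ) (xl xl1 : S.FaceS) (hd : inDelta S xl xl1)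
    (F G : ℕ → S.FaceS) (hF1 : F (l+1) = xl1) (hG1 : G (l+1) = xl1) :
    flagLt S l n (Function.update F l xl) (Function.update G l xl) ↔ flagLt S (l+1) n G F := by
  have hFl : Function.update F l xl l = xl := Function.update_self l xl F
  have hGl : Function.update G l xl l = xl := Function.update_self l xl G
  have hFu : ∀ i, l + 1 ≤ i → Function.update F l xl i = F i :=
    fun i hi => Function.update_of_ne (show i ≠ l by omega) xl F
  have hGu : ∀ i, l + 1 ≤ i → Function.update G l xl i = G i :=
    fun i hi => Function.update_of_ne (show i ≠ l by omega) xl G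
  have hsgnF : ∀ j, l + 1 ≤ j → sgnSeg S l (Function.update F l xl) j = -sgnSeg S (l+1) F j := by
    intro j hj
    rw [sgnSeg_shift_delta S l (Function.update F l xl)
      (by rw [hFl, hFu (l+1) le_rfl, hF1]; exact hd) j hj, neg_inj]
    exact sgnSeg_congr S (l+1) _ F j (fun i hi _ => hFu i hi)
  constructor
  · rintro ⟨k, hkl, hkn, hag, hne, hc⟩
    have hkne_l : k ≠ l := fun he => hne (by rw [he, hFl, hGl])
    have hkne_l1 : k ≠ l + 1 := fun he => hne (by rw [he, hFu _ le_rfl, hGu _ le_rfl, hF1, hG1])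
    have hk2 : l + 2 ≤ k := by omega
    have hagF : ∀ i, l + 1 ≤ i → i < k → F i = G i := by
      intro i hi hik
      have := hag i (by omega) hik
      rwa [hFu i hi, hGu i hi] at this
    have hsG : sgnSeg S (l+1) G (k-1) = sgnSeg S (l+1) F (k-1) :=
      sgnSeg_congr S (l+1) G F (k-1) (fun i hi hij => (hagF i hi (by omega)).symm)
    refine ⟨k, by omega, hkn, ?_, ?_, ?_⟩
    · exact fun i hi hik => (hagF i hi hik).symm
    · rw [hFu k (by omega), hGu k (by omega)] at hne
      exact fun hh => hne hh.symm
    · rcases hc with ⟨h0, _⟩ | ⟨hk0, hs, hp⟩ | ⟨hk0, hs, hp⟩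
      · omega
      · have hsF : sgnSeg S (l+1) F (k-1) = -1 := by
          have h := hsgnF (k-1) (by omega)
          rw [hs] at h
          omega
        refine Or.inr (Or.inr ⟨by omega, by rw [hsG]; exact hsF, ?_⟩)
        rw [hFu (k-1) (by omega), hFu k (by omega), hGu k (by omega)] at hp
        rw [← hagF (k-1) (by omega) (by omega)]
        exact hp
      · have hsF : sgnSeg S (l+1) F (k-1) = 1 := by
          have h := hsgnF (k-1) (by omega)
          rw [hs] at h
          omega
        refine Or.inr (Or.inl ⟨by omega, by rw [hsG]; exact hsF, ?_⟩)
        rw [hFu (k-1) (by omega), hFu k (by omega), hGu k (by omega)] at hp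
        rw [← hagF (k-1) (by omega) (by omega)]
        exact hp
  · rintro ⟨k, hkl, hkn, hag, hne, hc⟩
    have hkne_l1 : k ≠ l + 1 := fun he => hne (by rw [he, hF1, hG1])
    have hk2 : l + 2 ≤ k := by omega
    have hsG : sgnSeg S (l+1) G (k-1) = sgnSeg S (l+1) F (k-1) :=
      sgnSeg_congr S (l+1) G F (k-1) (fun i hi hij => hag i hi (by omega))
    refine ⟨k, by omega, hkn, ?_, ?_, ?_⟩
    · intro i hi hik
      rcases Nat.eq_or_lt_of_le hi with he | hlt
      · rw [← he, hFl, hGl]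
      · rw [hFu i (by omega), hGu i (by omega)]
        exact (hag i (by omega) hik).symm
    · rw [hFu k (by omega), hGu k (by omega)]
      exact fun hh => hne hh.symm
    · rcases hc with ⟨h0, _⟩ | ⟨hk0, hs, hp⟩ | ⟨hk0, hs, hp⟩
      · omega
      · refine Or.inr (Or.inr ⟨by omega, ?_, ?_⟩)
        · rw [hsgnF (k-1) (by omega), ← hsG, hs]
        · rw [hFu (k-1) (by omega), hFu k (by omega), hGu k (by omega),
            ← hag (k-1) (by omega) (by omega)]
          exact hp
      · refine Or.inr (Or.inl ⟨by omega, ?_, ?_⟩)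
        · rw [hsgnF (k-1) (by omega), ← hsG, hs]
          norm_num
        · rw [hFu (k-1) (by omega), hFu k (by omega), hGu k (by omega),
            ← hag (k-1) (by omega) (by omega)]
          exact hp

lemma caseB (l n : ℕ) (hln : l + 1 ≤ n) (xl xl1 : S.FaceS)
    (F G H : ℕ → S.FaceS) (hF1 : F (l+1) = xl1) (hG1 : G (l+1) = xl1)
    (hHl : H l = xl) (hH1 : H (l+1) ≠ xl1)
    (hlt : flagLt S l n (Function.update F l xl) H) :
    flagLt S l n (Function.update G l xl) H := by
  obtain ⟨k, hkl, hkn, hag, hne, hc⟩ := hlt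
  have hFl : Function.update F l xl l = xl := Function.update_self l xl F
  have hkeq : k = l + 1 := by
    by_contra hk
    rcases Nat.lt_or_ge k (l+1) with h | h
    · have hkl' : k = l := by omega
      exact hne (by rw [hkl', hFl, hHl])
    · have h2 : l + 2 ≤ k := by omega
      have := hag (l+1) (by omega) (by omega)
      rw [Function.update_of_ne (show l + 1 ≠ l by omega) xl F, hF1] at this
      exact hH1 this.symm
  subst hkeq
  have hl1 : l + 1 - 1 = l := by omega
  rcases hc with ⟨h0, _⟩ | ⟨_, hs, hp⟩ | ⟨_, hs, hp⟩
  · omega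
  · rw [hl1, hFl, Function.update_of_ne (by omega : l + 1 ≠ l) xl F, hF1] at hp
    refine ⟨l+1, by omega, by omega, ?_, ?_, Or.inr (Or.inl ⟨by omega, ?_, ?_⟩)⟩
    · intro i hi hik
      have hil : i = l := by omega
      rw [hil, Function.update_self, hHl]
    · rw [Function.update_of_ne (by omega : l + 1 ≠ l) xl G, hG1]
      exact fun hh => hH1 hh.symm
    · rw [hl1]
      exact sgnSeg_of_le S l _ l le_rfl
    · rw [hl1, Function.update_self, Function.update_of_ne (by omega : l + 1 ≠ l) xl G, hG1]
      exact hp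
  · rw [hl1, sgnSeg_of_le S l _ l le_rfl] at hs
    exact absurd hs (by decide)

lemma mem_update (l n : ℕ) (hln : l + 1 ≤ n) (t xl1 xl : S.FaceS)
    (hxd : xl.1 = l) (hb : inBoundary S xl xl1)
    (F : ℕ → S.FaceS) (hF : MemFlags S (l+1) n t xl1 F) :
    MemFlags S l n t xl (Function.update F l xl) := by
  obtain ⟨⟨hdim, hbd⟩, htop, hbot⟩ := hF
  refine ⟨⟨?_, ?_⟩, ?_, ?_⟩
  · intro i hi hin
    rcases Nat.eq_or_lt_of_le hi with he | h
    · rw [← he, Function.update_self, hxd, he]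
    · rw [Function.update_of_ne (show i ≠ l by omega) xl F]
      exact hdim i (by omega) hin
  · intro i hi hin
    rcases Nat.eq_or_lt_of_le hi with he | h
    · rw [← he, Function.update_self, Function.update_of_ne (by omega : l + 1 ≠ l) xl F, hbot]
      exact hb
    · rw [Function.update_of_ne (show i ≠ l by omega) xl F,
        Function.update_of_ne (show i + 1 ≠ l by omega) xl F]
      exact hbd i (by omega) hin
  · rw [Function.update_of_ne (by omega : n ≠ l) xl F]
    exact htop
  · exact Function.update_self l xl F

lemma mem_restrict (l n : ℕ) (t xl xl1 : S.FaceS) (H : ℕ → S.FaceS)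
    (hH : MemFlags S l n t xl H) (hH1 : H (l+1) = xl1) :
    MemFlags S (l+1) n t xl1 H :=
  ⟨⟨fun i hi hin => hH.1.1 i (by omega) hin, fun i hi hin => hH.1.2 i (by omega) hin⟩,
    hH.2.1, hH1⟩

end Helpers

/-- Extending flags by a face `x_l ∈ ∂(x_{l+1})` preserves the
successor function and the flag order: covariantly when `x_l = γ(x_{l+1})` and
contravariantly (from the opposite order) when `x_l ∈ δ(x_{l+1})`. -/
theorem flag_extension_preserves_successor
    (S : PHg) (hS : IsOpetope S) (n : ℕ) (hn : hasDim S n)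
    (t : S.FaceS) (ht : t.1 = n)
    (l : ℕ) (hln : l + 1 ≤ n)
    (xl1 xl : S.FaceS) (hd1 : xl1.1 = l + 1) :
    ((xl = gammaS S xl1) →
      (∀ F G, MemFlags S (l+1) n t xl1 F → MemFlags S (l+1) n t xl1 G →
        flagLt S (l+1) n F G →
        flagLt S l n (Function.update F l xl) (Function.update G l xl)) ∧
      (∀ F G, SuccFl S (l+1) n t xl1 F G →
        SuccFl S l n t xl (Function.update F l xl) (Function.update G l xl))) ∧
    ((inDelta S xl xl1) →
      (∀ F G, MemFlags S (l+1) n t xl1 F → MemFlags S (l+1) n t xl1 G →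
        flagLt S (l+1) n G F →
        flagLt S l n (Function.update F l xl) (Function.update G l xl)) ∧
      (∀ F G, SuccFl S (l+1) n t xl1 G F →
        SuccFl S l n t xl (Function.update F l xl) (Function.update G l xl))) := by
  constructor
  · intro hγ
    have hnd : ¬ inDelta S xl xl1 := fun hdel =>
      hS.strict xl (Relation.TransGen.single ⟨xl1, hdel, hγ.symm⟩)
    have hxd : xl.1 = l := by rw [hγ, gammaS_dim, hd1]; omega
    have hb : inBoundary S xl xl1 := Or.inl ⟨by rw [hd1]; omega, hγ.symm⟩
    constructor
    · intro F G hF hG hlt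
      exact (transfer_gamma S l n xl xl1 hnd F G hF.2.2 hG.2.2).2 hlt
    · rintro F G ⟨hF, hG, hFG, hmin⟩
      have hF1 := hF.2.2
      have hG1 := hG.2.2
      refine ⟨mem_update S l n hln t xl1 xl hxd hb F hF,
        mem_update S l n hln t xl1 xl hxd hb G hG,
        (transfer_gamma S l n xl xl1 hnd F G hF1 hG1).2 hFG, ?_⟩
      intro H hH hlt
      have hHl : H l = xl := hH.2.2
      have hHup : Function.update H l xl = H := by
        funext i
        rcases eq_or_ne i l with he | hne'
        · rw [he, Function.update_self, hHl]
        · rw [Function.update_of_ne hne' xl H]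
      by_cases hH1 : H (l+1) = xl1
      · rw [← hHup] at hlt
        have hFH := (transfer_gamma S l n xl xl1 hnd F H hF1 hH1).1 hlt
        rcases hmin H (mem_restrict S l n t xl xl1 H hH hH1) hFH with he | hl2
        · left
          intro i hi hin
          rcases Nat.eq_or_lt_of_le hi with hel | h
          · rw [← hel, Function.update_self, hHl]
          · rw [Function.update_of_ne (show i ≠ l by omega) xl G]
            exact he i (by omega) hin
        · right
          rw [← hHup]
          exact (transfer_gamma S l n xl xl1 hnd G H hG1 hH1).2 hl2
      · exact Or.inr (caseB S l n hln xl xl1 F G H hF1 hG1 hHl hH1 hlt)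
  · intro hδ
    have hxd : xl.1 = l := by
      have := inDelta_dim S hδ
      omega
    have hb : inBoundary S xl xl1 := Or.inr hδ
    constructor
    · intro F G hF hG hlt
      exact (transfer_delta S l n xl xl1 hδ F G hF.2.2 hG.2.2).2 hlt
    · rintro F G ⟨hG, hF, hGF, hmin⟩
      have hF1 := hF.2.2
      have hG1 := hG.2.2
      refine ⟨mem_update S l n hln t xl1 xl hxd hb F hF,
        mem_update S l n hln t xl1 xl hxd hb G hG,
        (transfer_delta S l n xl xl1 hδ F G hF1 hG1).2 hGF, ?_⟩
      intro H hH hlt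
      have hHl : H l = xl := hH.2.2
      have hHup : Function.update H l xl = H := by
        funext i
        rcases eq_or_ne i l with he | hne'
        · rw [he, Function.update_self, hHl]
        · rw [Function.update_of_ne hne' xl H]
      by_cases hH1 : H (l+1) = xl1
      · rw [← hHup] at hlt
        have hHF : flagLt S (l+1) n H F :=
          (transfer_delta S l n xl xl1 hδ F H hF1 hH1).1 hlt
        have hHmem := mem_restrict S l n t xl xl1 H hH hH1
        by_cases heq : EqOnFl (l+1) n G H
        · left
          intro i hi hin
          rcases Nat.eq_or_lt_of_le hi with hel | h
          · rw [← hel, Function.update_self, hHl]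
          · rw [Function.update_of_ne (show i ≠ l by omega) xl G]
            exact heq i (by omega) hin
        · rcases flag_tri S hS (l+1) n t xl1 G H hG hHmem heq with hGH | hHG
          · rcases hmin H hHmem hGH with heFH | hFH
            · exfalso
              obtain ⟨k, hk1, hk2, -, hnek, -⟩ := hHF
              exact hnek (heFH k hk1 hk2).symm
            · exact (flagLt_asymm S hS (l+1) n F H (hF1.trans hH1.symm) hFH hHF).elim
          · right
            rw [← hHup]
            exact (transfer_delta S l n xl xl1 hδ G H hG1 hH1).2 hHG
      · exact Or.inr (caseB S l n hln xl xl1 F G H hF1 hG1 hHl hH1 hlt)
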